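/- For every ℓ ≥ 1, the length of the longest strictly decreasing subsequence of the digit-reversal permutation R_k(ℓ) equals (k+1)·k^{ℓ/2 − 1} − 1 if ℓ is even, and equals 2·k^{(ℓ−1)/2} − 1 if ℓ is odd. -/

import Mathlib

/-- `digitRev k ℓ n` : the radix-`k` digit reversal of `n`, viewed as a string of exactly
`ℓ` base-`k` digits (padded with leading zeros). -/
def digitRev (k : ℕ) : ℕ → ℕ → ℕ
  | 0, _ => 0
  | ℓ + 1, n => n % k * k ^ ℓ + digitRev k ℓ (n / k)

/-- `f : Fin M → ℕ` has a strictly decreasing subsequence of length `d`. -/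
def HasDecSubseq (M : ℕ) (f : Fin M → ℕ) (d : ℕ) : Prop :=
  ∃ pos : Fin d → Fin M, StrictMono pos ∧ StrictAnti (fun t => f (pos t))

namespace S11

def Dv (k ℓ : ℕ) : ℕ := if Even ℓ then (k+1) * k^(ℓ/2 - 1) - 1 else 2 * k^(ℓ/2) - 1

lemma Dv_one (k : ℕ) : Dv k 1 = 1 := by simp [Dv, Nat.even_iff]

lemma Dv_two (k : ℕ) : Dv k 2 = k := by simp [Dv]

lemma Dv_pos {k : ℕ} (hk : 1 ≤ k) {ℓ : ℕ} (hℓ : 1 ≤ ℓ) : 1 ≤ Dv k ℓ := by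
  unfold Dv
  split
  · rename_i he
    have h2 : 2 ≤ ℓ := by
      rcases he with ⟨m, hm⟩; omega
    have h3 : 2 ≤ (k+1) * k^(ℓ/2 - 1) := by
      have : 0 < k^(ℓ/2 - 1) := Nat.pow_pos hk
      nlinarith
    omega
  · have : 0 < k^(ℓ/2) := Nat.pow_pos hk
    omega

lemma Dv_even (k m : ℕ) : Dv k (2*m) = (k+1) * k^(m-1) - 1 := by
  unfold Dv
  rw [if_pos ⟨m, two_mul m⟩, show 2*m/2 = m from by omega]

lemma Dv_odd (k m : ℕ) : Dv k (2*m+1) = 2 * k^m - 1 := by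
  unfold Dv
  rw [if_neg (by simp [Nat.even_iff]), show (2*m+1)/2 = m from by omega]

lemma Dv_step {k : ℕ} (hk : 1 ≤ k) {ℓ : ℕ} (hℓ : 1 ≤ ℓ) :
    Dv k (ℓ+2) = k * Dv k ℓ + (k-1) := by
  rcases Nat.even_or_odd ℓ with he | ho
  · obtain ⟨m, rfl⟩ := he
    have hm : 1 ≤ m := by omega
    have e0 : m + m = 2*m := by ring
    rw [e0, show 2*m+2 = 2*(m+1) from by ring, Dv_even, Dv_even, show m+1-1 = m from rfl,
      show k^m = k^(m-1)*k from by rw [← pow_succ]; congr 1; omega]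
    have hP : 0 < k^(m-1) := Nat.pow_pos hk
    set P := k^(m-1) with hPdef
    have e1 : (k+1) * (P * k) = k * ((k+1)*P) := by ring
    have e2 : k * ((k+1)*P) = k * ((k+1)*P - 1) + k := by
      have h6 : 1 ≤ (k+1)*P := by nlinarith
      have h5 : (k+1)*P - 1 + 1 = (k+1)*P := by omega
      calc k * ((k+1)*P) = k * ((k+1)*P - 1 + 1) := by rw [h5]
        _ = k * ((k+1)*P - 1) + k := by ring
    have hk2 : k ≤ k * ((k+1)*P) := by nlinarith
    omega
  · obtain ⟨m, rfl⟩ := ho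
    rw [show 2*m+1+2 = 2*(m+1)+1 from by ring, Dv_odd, Dv_odd, pow_succ]
    have hP : 0 < k^m := Nat.pow_pos hk
    set P := k^m with hPdef
    have e1 : 2 * (P * k) = k * (2 * P) := by ring
    have e2 : k * (2*P) = k * (2*P - 1) + k := by
      have h5 : 2*P - 1 + 1 = 2*P := by omega
      calc k * (2*P) = k * (2*P - 1 + 1) := by rw [h5]
        _ = k * (2*P-1) + k := by ring
    have hk2 : k ≤ k * (2*P) := by nlinarith
    omega


/- ### digitRev basics -/

lemma rev_lt {k : ℕ} (hk : 1 ≤ k) : ∀ ℓ n, digitRev k ℓ n < k^ℓ := by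
  intro ℓ
  induction ℓ with
  | zero => intro n; simp [digitRev]
  | succ m ih =>
    intro n
    have h1 : n % k ≤ k - 1 := by
      have := Nat.mod_lt n (show 0 < k from hk); omega
    have h2 : digitRev k m (n/k) < k^m := ih _
    have h3 : n % k * k^m ≤ (k-1) * k^m := Nat.mul_le_mul_right _ h1
    have h4 : (k-1) * k^m + k^m = k * k^m := by
      have : k - 1 + 1 = k := by omega
      calc (k-1)*k^m + k^m = (k-1+1)*k^m := by ring
        _ = k * k^m := by rw [this]
    have h5 : k^(m+1) = k * k^m := by rw [pow_succ]; ring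
    simp only [digitRev]
    omega

lemma rev_zero (k : ℕ) : ∀ ℓ, digitRev k ℓ 0 = 0 := by
  intro ℓ; induction ℓ with
  | zero => rfl
  | succ m ih => simp [digitRev, ih]

lemma rev_succ {k : ℕ} (hk : 1 ≤ k) :
    ∀ ℓ m, digitRev k (ℓ+1) m = digitRev k ℓ (m % k^ℓ) * k + m / k^ℓ % k := by
  intro ℓ
  induction ℓ with
  | zero => intro m; simp [digitRev]
  | succ j ih =>
    intro m
    have hk0 : 0 < k := hk
    have e1 : m % k^(j+1) % k = m % k := Nat.mod_mod_of_dvd _ (dvd_pow_self k (by omega))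
    have e2 : m % k^(j+1) / k = m / k % k^j := by
      rw [pow_succ']
      exact (Nat.mod_mul_right_div_self m k (k^j)).symm ▸ rfl
    have e3 : m / k / k^j = m / k^(j+1) := by
      rw [Nat.div_div_eq_div_mul, pow_succ']
    calc digitRev k (j+2) m = m % k * k^(j+1) + digitRev k (j+1) (m/k) := rfl
      _ = m % k * k^(j+1) + (digitRev k j (m/k % k^j) * k + m/k/k^j % k) := by rw [ih]
      _ = (m % k^(j+1) % k * k^j + digitRev k j (m % k^(j+1) / k)) * k + m/k^(j+1) % k := by
          rw [e1, e2, e3, pow_succ]; ring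
      _ = digitRev k (j+1) (m % k^(j+1)) * k + m/k^(j+1) % k := rfl

lemma rev_decomp {k : ℕ} (hk : 1 ≤ k) (ℓ n : ℕ) :
    digitRev k (ℓ+2) n
      = n % k * k^(ℓ+1) + digitRev k ℓ (n/k % k^ℓ) * k + n / k^(ℓ+1) % k := by
  have e3 : n / k / k^ℓ = n / k^(ℓ+1) := by rw [Nat.div_div_eq_div_mul, pow_succ']
  calc digitRev k (ℓ+2) n = n % k * k^(ℓ+1) + digitRev k (ℓ+1) (n/k) := rfl
    _ = n % k * k^(ℓ+1) + (digitRev k ℓ (n/k % k^ℓ) * k + n/k/k^ℓ % k) := by rw [rev_succ hk]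
    _ = _ := by rw [e3]; ring

lemma rev_rev {k : ℕ} (hk : 1 ≤ k) : ∀ ℓ n, n < k^ℓ → digitRev k ℓ (digitRev k ℓ n) = n := by
  intro ℓ
  induction ℓ with
  | zero =>
    intro n hn
    simp only [pow_zero, Nat.lt_one_iff] at hn
    subst hn; rfl
  | succ j ih =>
    intro n hn
    have hd : digitRev k j (n/k) < k^j := rev_lt hk _ _
    have hnk : n / k < k^j := by
      rw [Nat.div_lt_iff_lt_mul hk]
      calc n < k^(j+1) := hn
        _ = k^j * k := pow_succ k j
    have e0 : digitRev k (j+1) n = n % k * k^j + digitRev k j (n/k) := rfl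
    rw [e0, rev_succ hk]
    have e1 : (n % k * k^j + digitRev k j (n/k)) % k^j = digitRev k j (n/k) := by
      rw [add_comm, Nat.add_mul_mod_self_right]
      exact Nat.mod_eq_of_lt hd
    have e2 : (n % k * k^j + digitRev k j (n/k)) / k^j = n % k := by
      rw [add_comm, Nat.add_mul_div_right _ _ (Nat.pow_pos hk),
        Nat.div_eq_of_lt hd, zero_add]
    rw [e1, e2, ih _ hnk, Nat.mod_mod_of_dvd _ dvd_rfl, Nat.div_add_mod']

/- ### lexicographic splitting -/

lemma lex_split {B a a' b b' : ℕ} (hb : b < B) (hb' : b' < B)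
    (h : a*B + b < a'*B + b') : a < a' ∨ (a = a' ∧ b < b') := by
  rcases lt_trichotomy a a' with h1 | h1 | h1
  · exact Or.inl h1
  · subst h1; exact Or.inr ⟨rfl, by omega⟩
  · exfalso
    have h2 : (a'+1) * B ≤ a * B := Nat.mul_le_mul_right _ (by omega)
    have h3 : (a'+1) * B = a'*B + B := by ring
    rw [h3] at h2
    omega

lemma tri_split {k ℓ : ℕ} {A A' B B' C C' : ℕ} (hB : B < k^ℓ) (hB' : B' < k^ℓ)
    (hC : C < k) (hC' : C' < k)
    (h : A*k^(ℓ+1) + (B*k + C) < A'*k^(ℓ+1) + (B'*k + C')) :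
    A < A' ∨ (A = A' ∧ (B < B' ∨ (B = B' ∧ C < C'))) := by
  have hin : ∀ b c : ℕ, b < k^ℓ → c < k → b*k + c < k^(ℓ+1) := by
    intro b c h1 h2
    have h3 : (b+1)*k ≤ k^ℓ * k := Nat.mul_le_mul_right _ (by omega)
    have h4 : (b+1)*k = b*k + k := by ring
    have h5 : k^(ℓ+1) = k^ℓ * k := pow_succ k ℓ
    omega
  rcases lex_split (hin _ _ hB hC) (hin _ _ hB' hC') h with h1 | ⟨h1, h2⟩
  · exact Or.inl h1
  · exact Or.inr ⟨h1, lex_split hC hC' h2⟩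

lemma split_n (k ℓ n : ℕ) :
    n = n/k^(ℓ+1) * k^(ℓ+1) + ((n/k % k^ℓ) * k + n % k) := by
  have h3 : n/k/k^ℓ = n/k^(ℓ+1) := by rw [Nat.div_div_eq_div_mul, pow_succ']
  have h5 : k^(ℓ+1) = k^ℓ * k := pow_succ k ℓ
  set q := n / k with hqdef
  have hq : n = q*k + n%k := by rw [mul_comm]; exact (Nat.div_add_mod n k).symm
  have hq2 : q = n/k^(ℓ+1) * k^ℓ + q % k^ℓ := by
    rw [← h3, mul_comm]; exact (Nat.div_add_mod q (k^ℓ)).symm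
  calc n = q*k + n%k := hq
    _ = (n/k^(ℓ+1) * k^ℓ + q % k^ℓ)*k + n%k := by rw [← hq2]
    _ = _ := by rw [h5]; ring


/- ### the potential function -/

def Hf (k : ℕ) : ℕ → ℕ → ℤ
  | 0, _ => 0
  | 1, _ => 0
  | 2, n => (n / k % k : ℕ) + ((k : ℤ) - 1) - (n % k : ℕ)
  | (ℓ+3), n => ((n / k^(ℓ+2) % k : ℕ) + ((k : ℤ) - 1) - (n % k : ℕ)) * ((Dv k (ℓ+1) : ℤ) + 1)
      + Hf k (ℓ+1) (n / k % k^(ℓ+1))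

lemma Hf_eq {k ℓ : ℕ} (hℓ : 1 ≤ ℓ) (n : ℕ) :
    Hf k (ℓ+2) n = ((n / k^(ℓ+1) % k : ℕ) + ((k:ℤ)-1) - (n % k : ℕ)) * ((Dv k ℓ : ℤ)+1)
      + Hf k ℓ (n / k % k^ℓ) := by
  obtain ⟨m, rfl⟩ : ∃ m, ℓ = m + 1 := ⟨ℓ-1, by omega⟩
  rfl

def Pk (k ℓ : ℕ) : Prop :=
  (∀ n, n < k^ℓ → 0 ≤ Hf k ℓ n ∧ Hf k ℓ n ≤ 2*((Dv k ℓ : ℤ) - 1)) ∧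
  (∀ n n', n < k^ℓ → n' < k^ℓ → n < n' → Hf k ℓ n ≤ Hf k ℓ n' + ((Dv k ℓ : ℤ) - 1)) ∧
  (∀ n n', n < k^ℓ → n' < k^ℓ → digitRev k ℓ n' < digitRev k ℓ n →
      Hf k ℓ n ≤ Hf k ℓ n' + ((Dv k ℓ : ℤ) - 1)) ∧
  (∀ n n', n < k^ℓ → n' < k^ℓ → n < n' → digitRev k ℓ n' < digitRev k ℓ n →
      Hf k ℓ n + 2 ≤ Hf k ℓ n')

lemma rev_one {k : ℕ} (n : ℕ) (hn : n < k) : digitRev k 1 n = n := by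
  simp [digitRev, Nat.mod_eq_of_lt hn]

lemma Pk_one {k : ℕ} (hk : 2 ≤ k) : Pk k 1 := by
  have h1 : ∀ n, Hf k 1 n = 0 := fun n => rfl
  refine ⟨?_, ?_, ?_, ?_⟩
  · intro n hn
    rw [h1, Dv_one]
    norm_num
  · intro n n' _ _ _
    rw [h1, h1, Dv_one]; norm_num
  · intro n n' _ _ _
    rw [h1, h1, Dv_one]; norm_num
  · intro n n' hn hn' hlt hrev
    rw [pow_one] at hn hn'
    rw [rev_one n hn, rev_one n' hn'] at hrev
    omega

lemma Pk_two {k : ℕ} (hk : 2 ≤ k) : Pk k 2 := by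
  have hkpos : 0 < k := by omega
  have hHf : ∀ n, Hf k 2 n = (n / k % k : ℕ) + ((k : ℤ) - 1) - (n % k : ℕ) := fun n => rfl
  have hrev2 : ∀ n, digitRev k 2 n = (n % k) * k + n / k % k := by
    intro n
    have h := rev_succ (show 1 ≤ k from by omega) 1 n
    rw [h, pow_one, rev_one (n % k) (Nat.mod_lt n hkpos)]
  have hform : ∀ n, n < k^2 → n = (n / k % k) * k + n % k := by
    intro n hn
    have h2 : n / k < k := by
      rw [Nat.div_lt_iff_lt_mul hkpos]
      calc n < k^2 := hn
        _ = k * k := by ring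
    rw [Nat.mod_eq_of_lt h2, Nat.div_add_mod']
  have hsplit : ∀ n n', n < k^2 → n' < k^2 → n < n' →
      n / k % k < n' / k % k ∨ (n / k % k = n' / k % k ∧ n % k < n' % k) := by
    intro n n' hn hn' hlt
    exact lex_split (Nat.mod_lt n hkpos) (Nat.mod_lt n' hkpos)
      (by rw [← hform n hn, ← hform n' hn']; exact hlt)
  have hrsplit : ∀ n n', digitRev k 2 n' < digitRev k 2 n →
      n' % k < n % k ∨ (n' % k = n % k ∧ n' / k % k < n / k % k) := by
    intro n n' hlt
    exact lex_split (Nat.mod_lt _ hkpos) (Nat.mod_lt _ hkpos)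
      (by rw [← hrev2 n, ← hrev2 n']; exact hlt)
  refine ⟨?_, ?_, ?_, ?_⟩
  · intro n hn
    have h1 : n / k % k < k := Nat.mod_lt _ hkpos
    have h2 : n % k < k := Nat.mod_lt _ hkpos
    rw [hHf, Dv_two]
    constructor <;> omega
  · intro n n' hn hn' hlt
    have h1 : n' / k % k < k := Nat.mod_lt _ hkpos
    have h2 : n' % k < k := Nat.mod_lt _ hkpos
    have h3 : n % k < k := Nat.mod_lt _ hkpos
    rcases hsplit n n' hn hn' hlt with h | ⟨h, h'⟩ <;>
      · rw [hHf, hHf, Dv_two]; omega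
  · intro n n' hn hn' hlt
    have h1 : n / k % k < k := Nat.mod_lt _ hkpos
    have h2 : n' % k < k := Nat.mod_lt _ hkpos
    have h3 : n % k < k := Nat.mod_lt _ hkpos
    have h4 : n' / k % k < k := Nat.mod_lt _ hkpos
    rcases hrsplit n n' hlt with h | ⟨h, h'⟩ <;>
      · rw [hHf, hHf, Dv_two]; omega
  · intro n n' hn hn' hlt hrev
    rcases hsplit n n' hn hn' hlt with h | ⟨h, h'⟩ <;>
      rcases hrsplit n n' hrev with g | ⟨g, g'⟩ <;>
      · rw [hHf, hHf]; omega


lemma Pk_step {k : ℕ} (hk : 2 ≤ k) {ℓ : ℕ} (hℓ : 1 ≤ ℓ) (ih : Pk k ℓ) : Pk k (ℓ+2) := by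
  obtain ⟨ihR, ihL, ihV, ihC⟩ := ih
  have hk1 : 1 ≤ k := by omega
  have hkpos : (0:ℕ) < k := by omega
  have hDpos : 1 ≤ Dv k ℓ := Dv_pos hk1 hℓ
  set D : ℤ := (Dv k ℓ : ℤ) with hDdef
  have hDpos' : 1 ≤ D := by rw [hDdef]; exact_mod_cast hDpos
  have hc1 : ((k - 1 : ℕ) : ℤ) = (k:ℤ) - 1 := by omega
  have hD2 : (Dv k (ℓ+2) : ℤ) = (k:ℤ) * D + ((k:ℤ) - 1) := by
    rw [Dv_step hk1 hℓ, hDdef]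
    push_cast [hc1]
    ring
  have hKpow : k^(ℓ+2) = k^(ℓ+1) * k := pow_succ k (ℓ+1)
  have pack : ∀ n, n < k^(ℓ+2) →
      n / k^(ℓ+1) < k ∧ n / k % k^ℓ < k^ℓ ∧ n % k < k ∧
      Hf k (ℓ+2) n = ((n / k^(ℓ+1) : ℕ) + ((k:ℤ)-1) - (n % k : ℕ)) * (D+1)
        + Hf k ℓ (n / k % k^ℓ) ∧
      (0 ≤ Hf k ℓ (n / k % k^ℓ) ∧ Hf k ℓ (n / k % k^ℓ) ≤ 2*(D-1)) ∧
      (0:ℤ) ≤ ((n / k^(ℓ+1) : ℕ) : ℤ) := by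
    intro n hn
    have hX : n / k^(ℓ+1) < k := by
      rw [Nat.div_lt_iff_lt_mul (Nat.pow_pos hkpos)]
      calc n < k^(ℓ+2) := hn
        _ = k * k^(ℓ+1) := by ring
    have hT : n / k % k^ℓ < k^ℓ := Nat.mod_lt _ (Nat.pow_pos hkpos)
    have hY : n % k < k := Nat.mod_lt _ hkpos
    have hH := Hf_eq (k := k) hℓ n
    rw [Nat.mod_eq_of_lt hX] at hH
    have hR := ihR _ hT
    exact ⟨hX, hT, hY, hH, ⟨hR.1, hR.2⟩, by exact_mod_cast Nat.zero_le _⟩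
  have cmpLt : ∀ n n', n < k^(ℓ+2) → n' < k^(ℓ+2) → n < n' →
      n / k^(ℓ+1) < n' / k^(ℓ+1) ∨ (n / k^(ℓ+1) = n' / k^(ℓ+1) ∧
        (n / k % k^ℓ < n' / k % k^ℓ ∨ (n / k % k^ℓ = n' / k % k^ℓ ∧ n % k < n' % k))) := by
    intro n n' hn hn' hlt
    obtain ⟨hX, hT, hY, -, -, -⟩ := pack n hn
    obtain ⟨hX', hT', hY', -, -, -⟩ := pack n' hn'
    refine tri_split hT hT' hY hY' ?_
    rw [← split_n k ℓ n, ← split_n k ℓ n']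
    exact hlt
  have cmpRev : ∀ n n', n < k^(ℓ+2) → n' < k^(ℓ+2) →
      digitRev k (ℓ+2) n' < digitRev k (ℓ+2) n →
      n' % k < n % k ∨ (n' % k = n % k ∧
        (digitRev k ℓ (n' / k % k^ℓ) < digitRev k ℓ (n / k % k^ℓ) ∨
          (digitRev k ℓ (n' / k % k^ℓ) = digitRev k ℓ (n / k % k^ℓ) ∧
            n' / k^(ℓ+1) < n / k^(ℓ+1)))) := by
    intro n n' hn hn' hlt
    obtain ⟨hX, hT, hY, -, -, -⟩ := pack n hn
    obtain ⟨hX', hT', hY', -, -, -⟩ := pack n' hn'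
    have hRT : digitRev k ℓ (n / k % k^ℓ) < k^ℓ := rev_lt hk1 _ _
    have hRT' : digitRev k ℓ (n' / k % k^ℓ) < k^ℓ := rev_lt hk1 _ _
    refine tri_split hRT' hRT hX' hX ?_
    have e1 := rev_decomp hk1 ℓ n
    have e2 := rev_decomp hk1 ℓ n'
    rw [Nat.mod_eq_of_lt hX] at e1
    rw [Nat.mod_eq_of_lt hX'] at e2
    have e1' : digitRev k (ℓ+2) n
        = n % k * k^(ℓ+1) + (digitRev k ℓ (n / k % k^ℓ) * k + n / k^(ℓ+1)) := by
      rw [e1]; ring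
    have e2' : digitRev k (ℓ+2) n'
        = n' % k * k^(ℓ+1) + (digitRev k ℓ (n' / k % k^ℓ) * k + n' / k^(ℓ+1)) := by
      rw [e2]; ring
    rw [← e1', ← e2']
    exact hlt
  have hmul : ∀ z z' : ℤ, z ≤ z' → z*(D+1) ≤ z'*(D+1) := by
    intro z z' h
    exact mul_le_mul_of_nonneg_right h (by linarith)
  refine ⟨?_, ?_, ?_, ?_⟩
  · -- range
    intro n hn
    obtain ⟨hX, hT, hY, hH, ⟨hR0, hR1⟩, hXZ⟩ := pack n hn
    rw [hH, hD2]
    constructor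
    · have h0 : (0:ℤ) ≤ ((n / k^(ℓ+1) : ℕ) + ((k:ℤ)-1) - (n % k : ℕ)) := by omega
      nlinarith
    · have h1 : ((n / k^(ℓ+1) : ℕ) + ((k:ℤ)-1) - (n % k : ℕ)) ≤ 2*((k:ℤ)-1) := by omega
      have h2 := hmul _ _ h1
      have h3 : (2*((k:ℤ)-1))*(D+1) = 2*((k:ℤ)*D + ((k:ℤ)-1) - 1) - 2*(D-1) := by ring
      linarith
  · -- lex drop
    intro n n' hn hn' hlt
    obtain ⟨hX, hT, hY, hH, ⟨hR0, hR1⟩, hXZ⟩ := pack n hn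
    obtain ⟨hX', hT', hY', hH', ⟨hR0', hR1'⟩, hXZ'⟩ := pack n' hn'
    rw [hH, hH', hD2]
    rcases cmpLt n n' hn hn' hlt with h | ⟨h, h2⟩
    · have hz : ((n / k^(ℓ+1) : ℕ) + ((k:ℤ)-1) - (n % k : ℕ))
          ≤ ((n' / k^(ℓ+1) : ℕ) + ((k:ℤ)-1) - (n' % k : ℕ)) + ((k:ℤ)-2) := by omega
      have h2 := hmul _ _ hz
      have h3 : ((((n' / k^(ℓ+1) : ℕ) + ((k:ℤ)-1) - (n' % k : ℕ)) + ((k:ℤ)-2)))*(D+1)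
          = (((n' / k^(ℓ+1) : ℕ) + ((k:ℤ)-1) - (n' % k : ℕ)))*(D+1) + ((k:ℤ)-2)*(D+1) := by
        ring
      have h4 : ((k:ℤ)-2)*(D+1) = (k:ℤ)*D + (k:ℤ) - 2*D - 2 := by ring
      linarith
    · rcases h2 with h2 | ⟨h2, h3⟩
      · have hIH := ihL _ _ hT hT' h2
        have hz : ((n / k^(ℓ+1) : ℕ) + ((k:ℤ)-1) - (n % k : ℕ))
            ≤ ((n' / k^(ℓ+1) : ℕ) + ((k:ℤ)-1) - (n' % k : ℕ)) + ((k:ℤ)-1) := by omega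
        have h4 := hmul _ _ hz
        have h5 : ((((n' / k^(ℓ+1) : ℕ) + ((k:ℤ)-1) - (n' % k : ℕ)) + ((k:ℤ)-1)))*(D+1)
            = (((n' / k^(ℓ+1) : ℕ) + ((k:ℤ)-1) - (n' % k : ℕ)))*(D+1)
              + ((k:ℤ)-1)*(D+1) := by ring
        have h6 : ((k:ℤ)-1)*(D+1) = (k:ℤ)*D + (k:ℤ) - D - 1 := by ring
        linarith
      · have hz : ((n / k^(ℓ+1) : ℕ) + ((k:ℤ)-1) - (n % k : ℕ))
            ≤ ((n' / k^(ℓ+1) : ℕ) + ((k:ℤ)-1) - (n' % k : ℕ)) + ((k:ℤ)-1) := by omega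
        have h4 := hmul _ _ hz
        have h5 : ((((n' / k^(ℓ+1) : ℕ) + ((k:ℤ)-1) - (n' % k : ℕ)) + ((k:ℤ)-1)))*(D+1)
            = (((n' / k^(ℓ+1) : ℕ) + ((k:ℤ)-1) - (n' % k : ℕ)))*(D+1)
              + ((k:ℤ)-1)*(D+1) := by ring
        have h6 : ((k:ℤ)-1)*(D+1) = (k:ℤ)*D + (k:ℤ) - D - 1 := by ring
        rw [h2]
        linarith
  · -- rev drop
    intro n n' hn hn' hlt
    obtain ⟨hX, hT, hY, hH, ⟨hR0, hR1⟩, hXZ⟩ := pack n hn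
    obtain ⟨hX', hT', hY', hH', ⟨hR0', hR1'⟩, hXZ'⟩ := pack n' hn'
    rw [hH, hH', hD2]
    rcases cmpRev n n' hn hn' hlt with h | ⟨h, h2⟩
    · have hz : ((n / k^(ℓ+1) : ℕ) + ((k:ℤ)-1) - (n % k : ℕ))
          ≤ ((n' / k^(ℓ+1) : ℕ) + ((k:ℤ)-1) - (n' % k : ℕ)) + ((k:ℤ)-2) := by omega
      have h2 := hmul _ _ hz
      have h3 : ((((n' / k^(ℓ+1) : ℕ) + ((k:ℤ)-1) - (n' % k : ℕ)) + ((k:ℤ)-2)))*(D+1)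
          = (((n' / k^(ℓ+1) : ℕ) + ((k:ℤ)-1) - (n' % k : ℕ)))*(D+1) + ((k:ℤ)-2)*(D+1) := by
        ring
      have h4 : ((k:ℤ)-2)*(D+1) = (k:ℤ)*D + (k:ℤ) - 2*D - 2 := by ring
      linarith
    · rcases h2 with h2 | ⟨h2, h3⟩
      · have hIH := ihV _ _ hT hT' h2
        have hz : ((n / k^(ℓ+1) : ℕ) + ((k:ℤ)-1) - (n % k : ℕ))
            ≤ ((n' / k^(ℓ+1) : ℕ) + ((k:ℤ)-1) - (n' % k : ℕ)) + ((k:ℤ)-1) := by omega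
        have h4 := hmul _ _ hz
        have h5 : ((((n' / k^(ℓ+1) : ℕ) + ((k:ℤ)-1) - (n' % k : ℕ)) + ((k:ℤ)-1)))*(D+1)
            = (((n' / k^(ℓ+1) : ℕ) + ((k:ℤ)-1) - (n' % k : ℕ)))*(D+1)
              + ((k:ℤ)-1)*(D+1) := by ring
        have h6 : ((k:ℤ)-1)*(D+1) = (k:ℤ)*D + (k:ℤ) - D - 1 := by ring
        linarith
      · have hTT : n / k % k^ℓ = n' / k % k^ℓ := by
          rw [← rev_rev hk1 ℓ _ hT, ← rev_rev hk1 ℓ _ hT', h2]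
        have hz : ((n / k^(ℓ+1) : ℕ) + ((k:ℤ)-1) - (n % k : ℕ))
            ≤ ((n' / k^(ℓ+1) : ℕ) + ((k:ℤ)-1) - (n' % k : ℕ)) + ((k:ℤ)-1) := by omega
        have h4 := hmul _ _ hz
        have h5 : ((((n' / k^(ℓ+1) : ℕ) + ((k:ℤ)-1) - (n' % k : ℕ)) + ((k:ℤ)-1)))*(D+1)
            = (((n' / k^(ℓ+1) : ℕ) + ((k:ℤ)-1) - (n' % k : ℕ)))*(D+1)
              + ((k:ℤ)-1)*(D+1) := by ring
        have h6 : ((k:ℤ)-1)*(D+1) = (k:ℤ)*D + (k:ℤ) - D - 1 := by ring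
        rw [hTT]
        linarith
  · -- chain step
    intro n n' hn hn' hlt hrev
    obtain ⟨hX, hT, hY, hH, ⟨hR0, hR1⟩, hXZ⟩ := pack n hn
    obtain ⟨hX', hT', hY', hH', ⟨hR0', hR1'⟩, hXZ'⟩ := pack n' hn'
    rw [hH, hH']
    rcases cmpLt n n' hn hn' hlt with h | hrest
    on_goal 2 => obtain ⟨h, hrest⟩ := hrest; rcases hrest with h2 | ⟨h2, h3⟩
    · rcases cmpRev n n' hn hn' hrev with g | grest
      on_goal 2 => obtain ⟨g, grest⟩ := grest; rcases grest with g2 | ⟨g2, g3⟩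
      · -- X < X', Y' < Y : z' ≥ z + 2
        have hz : ((n / k^(ℓ+1) : ℕ) + ((k:ℤ)-1) - (n % k : ℕ)) + 2
            ≤ ((n' / k^(ℓ+1) : ℕ) + ((k:ℤ)-1) - (n' % k : ℕ)) := by omega
        have h4 := hmul _ _ hz
        have h5 : (((n / k^(ℓ+1) : ℕ) + ((k:ℤ)-1) - (n % k : ℕ)) + 2)*(D+1)
            = (((n / k^(ℓ+1) : ℕ) + ((k:ℤ)-1) - (n % k : ℕ)))*(D+1) + 2*D+2 := by ring
        linarith
      · -- X < X', Y = Y', rev T' < rev T : case d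
        have hIH := ihV _ _ hT hT' g2
        have hz : ((n / k^(ℓ+1) : ℕ) + ((k:ℤ)-1) - (n % k : ℕ)) + 1
            ≤ ((n' / k^(ℓ+1) : ℕ) + ((k:ℤ)-1) - (n' % k : ℕ)) := by omega
        have h4 := hmul _ _ hz
        have h5 : (((n / k^(ℓ+1) : ℕ) + ((k:ℤ)-1) - (n % k : ℕ)) + 1)*(D+1)
            = (((n / k^(ℓ+1) : ℕ) + ((k:ℤ)-1) - (n % k : ℕ)))*(D+1) + D+1 := by ring
        linarith
      · omega
    · rcases cmpRev n n' hn hn' hrev with g | grest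
      on_goal 2 => obtain ⟨g, grest⟩ := grest; rcases grest with g2 | ⟨g2, g3⟩
      · -- X = X', T < T', Y' < Y : case b
        have hIH := ihL _ _ hT hT' h2
        have hz : ((n / k^(ℓ+1) : ℕ) + ((k:ℤ)-1) - (n % k : ℕ)) + 1
            ≤ ((n' / k^(ℓ+1) : ℕ) + ((k:ℤ)-1) - (n' % k : ℕ)) := by omega
        have h4 := hmul _ _ hz
        have h5 : (((n / k^(ℓ+1) : ℕ) + ((k:ℤ)-1) - (n % k : ℕ)) + 1)*(D+1)
            = (((n / k^(ℓ+1) : ℕ) + ((k:ℤ)-1) - (n % k : ℕ)))*(D+1) + D+1 := by ring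
        linarith
      · -- case a
        have hIH := ihC _ _ hT hT' h2 g2
        have hz : ((n / k^(ℓ+1) : ℕ) + ((k:ℤ)-1) - (n % k : ℕ))
            = ((n' / k^(ℓ+1) : ℕ) + ((k:ℤ)-1) - (n' % k : ℕ)) := by
          rw [h, g]
        rw [hz]
        linarith
      · omega
    · rcases cmpRev n n' hn hn' hrev with g | grest
      on_goal 2 => obtain ⟨g, grest⟩ := grest; rcases grest with g2 | ⟨g2, g3⟩
      · omega
      · rw [h2] at g2; omega
      · omega


lemma Pk_all {k : ℕ} (hk : 2 ≤ k) : ∀ ℓ, 1 ≤ ℓ → Pk k ℓ := by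
  have key : ∀ m, Pk k (m+1) ∧ Pk k (m+2) := by
    intro m
    induction m with
    | zero => exact ⟨Pk_one hk, Pk_two hk⟩
    | succ j ih => exact ⟨ih.2, Pk_step hk (by omega) ih.1⟩
  intro ℓ hℓ
  obtain ⟨m, rfl⟩ : ∃ m, ℓ = m+1 := ⟨ℓ-1, by omega⟩
  exact (key m).1

lemma upper {k ℓ : ℕ} (hk : 2 ≤ k) (hℓ : 1 ≤ ℓ) (d : ℕ)
    (h : HasDecSubseq (k^ℓ) (fun p => digitRev k ℓ (p : ℕ)) d) : d ≤ Dv k ℓ := by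
  obtain ⟨pos, hmono, hanti⟩ := h
  rcases Nat.eq_zero_or_pos d with rfl | hd
  · exact Nat.zero_le _
  obtain ⟨P, -, -, PC⟩ := Pk_all hk ℓ hℓ
  have key : ∀ m (hm : m < d), 2*(m:ℤ) ≤ Hf k ℓ (pos ⟨m, hm⟩) - Hf k ℓ (pos ⟨0, hd⟩) := by
    intro m
    induction m with
    | zero => intro hm; simp
    | succ j ih =>
      intro hm
      have hj : j < d := by omega
      have hlt : (⟨j, hj⟩ : Fin d) < ⟨j+1, hm⟩ := by
        rw [Fin.mk_lt_mk]; omega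
      have h1 : pos ⟨j, hj⟩ < pos ⟨j+1, hm⟩ := hmono hlt
      have h2 := hanti hlt
      simp only at h2
      have h3 := PC ((pos ⟨j,hj⟩ : Fin (k^ℓ)) : ℕ) ((pos ⟨j+1,hm⟩ : Fin (k^ℓ)) : ℕ)
        (pos ⟨j,hj⟩).isLt (pos ⟨j+1,hm⟩).isLt h1 h2
      have h4 := ih hj
      push_cast
      push_cast at h4
      linarith
  have h4 := key (d-1) (by omega)
  have h5 := (P _ (pos ⟨d-1, by omega⟩).isLt).2
  have h6 := (P _ (pos ⟨0, hd⟩).isLt).1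
  have hD : 1 ≤ (Dv k ℓ : ℤ) := by exact_mod_cast Dv_pos (by omega) hℓ
  have hcast : ((d-1 : ℕ) : ℤ) = (d:ℤ)-1 := by omega
  have : (d:ℤ) ≤ (Dv k ℓ : ℤ) := by linarith [h4, h5, h6, hcast]
  exact_mod_cast this

/- ### lower bound : explicit chains -/

lemma rev_elem {k ℓ x t y : ℕ} (hk : 1 ≤ k) (hx : x < k) (ht : t < k^ℓ) (hy : y < k) :
    digitRev k (ℓ+2) (x*k^(ℓ+1) + t*k + y) = y*k^(ℓ+1) + digitRev k ℓ t * k + x := by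
  have hkpos : 0 < k := hk
  have hKpos : 0 < k^(ℓ+1) := Nat.pow_pos hkpos
  set n := x*k^(ℓ+1) + t*k + y with hn
  have hform : n = y + (x*k^ℓ + t)*k := by
    rw [hn, pow_succ]; ring
  have h1 : n % k = y := by
    rw [hform, Nat.add_mul_mod_self_right, Nat.mod_eq_of_lt hy]
  have h2 : n / k = x*k^ℓ + t := by
    rw [hform, Nat.add_mul_div_right _ _ hkpos, Nat.div_eq_of_lt hy, zero_add]
  have h3 : n / k % k^ℓ = t := by
    rw [h2, add_comm, Nat.add_mul_mod_self_right, Nat.mod_eq_of_lt ht]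
  have hin : t*k + y < k^(ℓ+1) := by
    have h5 : (t+1)*k ≤ k^ℓ*k := Nat.mul_le_mul_right _ (by omega)
    have h6 : (t+1)*k = t*k + k := by ring
    have h7 : k^(ℓ+1) = k^ℓ*k := pow_succ k ℓ
    omega
  have h4 : n / k^(ℓ+1) = x := by
    have hform2 : n = (t*k + y) + x*k^(ℓ+1) := by rw [hn]; ring
    rw [hform2, Nat.add_mul_div_right _ _ hKpos, Nat.div_eq_of_lt hin, zero_add]
  rw [rev_decomp hk, h1, h3, h4, Nat.mod_eq_of_lt hx]

lemma elem_lt {k ℓ x x' t t' y y' : ℕ} (ht : t < k^ℓ) (ht' : t' < k^ℓ)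
    (hy : y < k) (hy' : y' < k)
    (hcmp : x < x' ∨ (x = x' ∧ (t < t' ∨ (t = t' ∧ y < y')))) :
    x*k^(ℓ+1) + t*k + y < x'*k^(ℓ+1) + t'*k + y' := by
  have hin : ∀ t y : ℕ, t < k^ℓ → y < k → t*k + y < k^(ℓ+1) := by
    intro t y h1 h2
    have h5 : (t+1)*k ≤ k^ℓ*k := Nat.mul_le_mul_right _ (by omega)
    have h6 : (t+1)*k = t*k + k := by ring
    have h7 : k^(ℓ+1) = k^ℓ*k := pow_succ k ℓ
    omega
  rcases hcmp with h | ⟨h, h2 | ⟨h2, h3⟩⟩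
  · have h5 : (x+1)*k^(ℓ+1) ≤ x'*k^(ℓ+1) := Nat.mul_le_mul_right _ (by omega)
    have h6 : (x+1)*k^(ℓ+1) = x*k^(ℓ+1) + k^(ℓ+1) := by ring
    have h7 := hin t y ht hy
    have h8 := hin t' y' ht' hy'
    omega
  · subst h
    have h5 : (t+1)*k ≤ t'*k := Nat.mul_le_mul_right _ (by omega)
    have h6 : (t+1)*k = t*k + k := by ring
    omega
  · subst h; subst h2
    omega

def LB (k ℓ : ℕ) : Prop :=
  ∃ (l : List ℕ) (a b : ℕ), l.length = Dv k ℓ ∧ l.head? = some a ∧ l.getLast? = some b ∧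
    1 ≤ a ∧ 1 ≤ digitRev k ℓ b ∧ l.Chain' (· < ·) ∧
    l.Chain' (fun u v => digitRev k ℓ v < digitRev k ℓ u) ∧ ∀ x ∈ l, x < k^ℓ

lemma LB_one {k : ℕ} (hk : 2 ≤ k) : LB k 1 := by
  refine ⟨[1], 1, 1, ?_, rfl, rfl, le_refl 1, ?_, List.isChain_singleton 1,
    List.isChain_singleton 1, ?_⟩
  · rw [Dv_one]; rfl
  · rw [rev_one 1 (by omega)]
  · intro x hx
    simp at hx
    rw [hx, pow_one]
    omega


lemma rev_two {k : ℕ} (hk : 2 ≤ k) (n : ℕ) :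
    digitRev k 2 n = (n % k) * k + n / k % k := by
  have h := rev_succ (show 1 ≤ k from by omega) 1 n
  rw [h, pow_one, rev_one (n % k) (Nat.mod_lt n (by omega))]

lemma LB_two {k : ℕ} (hk : 2 ≤ k) : LB k 2 := by
  have hkpos : 0 < k := by omega
  set f : ℕ → ℕ := fun i => i*k + (k-1-i) with hf
  have hfrev : ∀ i, i < k → digitRev k 2 (f i) = (k-1-i)*k + i := by
    intro i hi
    have h1 : f i = (k-1-i) + i*k := by rw [hf]; ring
    have h2 : f i % k = k-1-i := by
      rw [h1, Nat.add_mul_mod_self_right, Nat.mod_eq_of_lt (by omega)]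
    have h3 : f i / k = i := by
      rw [h1, Nat.add_mul_div_right _ _ hkpos, Nat.div_eq_of_lt (by omega), zero_add]
    rw [rev_two hk, h2, h3, Nat.mod_eq_of_lt hi]
  obtain ⟨K, rfl⟩ : ∃ K, k = K+1 := ⟨k-1, by omega⟩
  refine ⟨(List.range (K+1)).map f, f 0, f K, ?_, ?_, ?_, ?_, ?_, ?_, ?_, ?_⟩
  · rw [List.length_map, List.length_range, Dv_two]
  · rw [List.head?_map, List.range_succ_eq_map]
    rfl
  · rw [show List.range (K+1) = List.range K ++ [K] from by rw [List.range_succ],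
      List.map_append]
    exact List.getLast?_concat
  · show 1 ≤ 0*(K+1) + (K+1-1-0)
    omega
  · rw [hfrev K (by omega)]
    omega
  · simp only [List.Chain']
    rw [List.isChain_map, List.isChain_range_succ]
    intro m hm
    show m*(K+1) + (K+1-1-m) < (m+1)*(K+1) + (K+1-1-(m+1))
    have h6 : (m+1)*(K+1) = m*(K+1) + (K+1) := by ring
    omega
  · simp only [List.Chain']
    rw [List.isChain_map, List.isChain_range_succ]
    intro m hm
    rw [hfrev m (by omega), hfrev (m+1) (by omega)]
    have h7 : K+1-1-m = (K+1-1-(m+1)) + 1 := by omega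
    have h7' : (K+1-1-m)*(K+1) = ((K+1-1-(m+1))+1)*(K+1) := by rw [h7]
    have h8 : ((K+1-1-(m+1)) + 1)*(K+1) = (K+1-1-(m+1))*(K+1) + (K+1) := by ring
    omega
  · intro x hx
    rw [List.mem_map] at hx
    obtain ⟨i, hi, rfl⟩ := hx
    rw [List.mem_range] at hi
    show i*(K+1) + (K+1-1-i) < (K+1)^2
    have h9 : (i+1)*(K+1) ≤ (K+1)*(K+1) := Nat.mul_le_mul_right _ (by omega)
    have h10 : (i+1)*(K+1) = i*(K+1) + (K+1) := by ring
    have h11 : (K+1)^2 = (K+1)*(K+1) := by ring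
    omega

def blockF (k ℓ x t : ℕ) : ℕ := x * k^(ℓ+1) + t * k + (k-1-x)

def glueE (k ℓ x : ℕ) : ℕ := x * k^(ℓ+1) + (k - x)

def buildL (k ℓ : ℕ) (l : List ℕ) : ℕ → List ℕ
  | 0 => l.map (blockF k ℓ 0)
  | x+1 => buildL k ℓ l x ++ glueE k ℓ (x+1) :: l.map (blockF k ℓ (x+1))

lemma buildL_spec {k ℓ : ℕ} (hk : 2 ≤ k) (hℓ : 1 ≤ ℓ)
    {l : List ℕ} {a b : ℕ} (hhead : l.head? = some a)
    (hlast : l.getLast? = some b) (ha : 1 ≤ a) (hb : 1 ≤ digitRev k ℓ b)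
    (hc1 : l.Chain' (· < ·)) (hc2 : l.Chain' (fun u v => digitRev k ℓ v < digitRev k ℓ u))
    (hmem : ∀ x ∈ l, x < k^ℓ) :
    ∀ x, x ≤ k-1 →
      (buildL k ℓ l x).length = (x+1) * l.length + x ∧
      (buildL k ℓ l x).head? = some (blockF k ℓ 0 a) ∧
      (buildL k ℓ l x).getLast? = some (blockF k ℓ x b) ∧
      (buildL k ℓ l x).Chain' (· < ·) ∧
      (buildL k ℓ l x).Chain' (fun u v => digitRev k (ℓ+2) v < digitRev k (ℓ+2) u) ∧
      (∀ e ∈ buildL k ℓ l x, e < k^(ℓ+2)) := by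
  have hk1 : 1 ≤ k := by omega
  have hkpos : 0 < k := by omega
  have hKpos : 0 < k^(ℓ+1) := Nat.pow_pos hkpos
  have h0pow : 0 < k^ℓ := Nat.pow_pos hkpos
  have hamem : a < k^ℓ := hmem a (List.mem_of_mem_head? (by rw [hhead]; rfl))
  have hbmem : b < k^ℓ := hmem b (List.mem_of_mem_getLast? (by rw [hlast]; rfl))
  have hlne : l ≠ [] := by
    intro h; rw [h] at hhead; simp at hhead
  have hkK : k ≤ k^(ℓ+1) := by
    calc k = k^1 := (pow_one k).symm
      _ ≤ k^(ℓ+1) := Nat.pow_le_pow_right hkpos (by omega)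
  have hin : ∀ t y : ℕ, t < k^ℓ → y < k → t*k + y < k^(ℓ+1) := by
    intro t y h1 h2
    have h5 : (t+1)*k ≤ k^ℓ*k := Nat.mul_le_mul_right _ (by omega)
    have h6 : (t+1)*k = t*k + k := by ring
    have h7 : k^(ℓ+1) = k^ℓ*k := pow_succ k ℓ
    omega
  have hblt : ∀ x t, x < k → t < k^ℓ → blockF k ℓ x t < k^(ℓ+2) := by
    intro x t hx ht
    unfold blockF
    have h4 := hin t (k-1-x) ht (by omega)
    have h8 : (x+1)*k^(ℓ+1) ≤ k*k^(ℓ+1) := Nat.mul_le_mul_right _ (by omega)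
    have h9 : (x+1)*k^(ℓ+1) = x*k^(ℓ+1) + k^(ℓ+1) := by ring
    have h10 : k^(ℓ+2) = k*k^(ℓ+1) := by rw [pow_succ, pow_succ]; ring
    omega
  have hglt : ∀ x, 1 ≤ x → x ≤ k-1 → glueE k ℓ x < k^(ℓ+2) := by
    intro x h1 h2
    unfold glueE
    have h8 : (x+1)*k^(ℓ+1) ≤ k*k^(ℓ+1) := Nat.mul_le_mul_right _ (by omega)
    have h9 : (x+1)*k^(ℓ+1) = x*k^(ℓ+1) + k^(ℓ+1) := by ring
    have h10 : k^(ℓ+2) = k*k^(ℓ+1) := by rw [pow_succ, pow_succ]; ring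
    omega
  have hbrev : ∀ x t, x < k → t < k^ℓ →
      digitRev k (ℓ+2) (blockF k ℓ x t) = (k-1-x)*k^(ℓ+1) + digitRev k ℓ t * k + x := by
    intro x t hx ht
    exact rev_elem hk1 hx ht (by omega)
  have hgrev : ∀ x, 1 ≤ x → x ≤ k-1 →
      digitRev k (ℓ+2) (glueE k ℓ x) = (k-x)*k^(ℓ+1) + x := by
    intro x h1 h2
    have h3 := rev_elem (k := k) (ℓ := ℓ) (x := x) (t := 0) (y := k - x)
      hk1 (by omega) h0pow (by omega)
    have h4 : glueE k ℓ x = x * k^(ℓ+1) + 0 * k + (k - x) := by unfold glueE; ring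
    rw [h4, h3, rev_zero]
    ring
  -- combined chain with membership
  have hcomb : l.Chain' (fun u v => u < v ∧ digitRev k ℓ v < digitRev k ℓ u ∧
      u < k^ℓ ∧ v < k^ℓ) := by
    simp only [List.Chain'] at hc1 hc2 ⊢
    rw [List.isChain_iff_getElem] at hc1 hc2 ⊢
    intro i h
    exact ⟨hc1 i h, hc2 i h, hmem _ (List.getElem_mem _), hmem _ (List.getElem_mem _)⟩
  -- chains on one block
  have hblock1 : ∀ x, (l.map (blockF k ℓ x)).Chain' (· < ·) := by
    intro x
    simp only [List.Chain']
    rw [List.isChain_map]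
    refine hcomb.imp ?_
    intro u v h
    obtain ⟨huv, -, -, -⟩ := h
    unfold blockF
    have h5 : (u+1)*k ≤ v*k := Nat.mul_le_mul_right _ (by omega)
    have h6 : (u+1)*k = u*k + k := by ring
    omega
  have hblock2 : ∀ x, x < k →
      (l.map (blockF k ℓ x)).Chain' (fun u v => digitRev k (ℓ+2) v < digitRev k (ℓ+2) u) := by
    intro x hx
    simp only [List.Chain']
    rw [List.isChain_map]
    refine hcomb.imp ?_
    intro u v h
    obtain ⟨-, hr, hu, hv⟩ := h
    rw [hbrev x u hx hu, hbrev x v hx hv]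
    have h5 : (digitRev k ℓ v + 1)*k ≤ digitRev k ℓ u * k := Nat.mul_le_mul_right _ (by omega)
    have h6 : (digitRev k ℓ v + 1)*k = digitRev k ℓ v * k + k := by ring
    omega
  have hbhead : ∀ x, (l.map (blockF k ℓ x)).head? = some (blockF k ℓ x a) := by
    intro x
    rw [List.head?_map, hhead]
    rfl
  have hblast : ∀ x, (l.map (blockF k ℓ x)).getLast? = some (blockF k ℓ x b) := by
    intro x
    rw [List.getLast?_map, hlast]
    rfl
  have hbne : ∀ x, l.map (blockF k ℓ x) ≠ [] := by
    intro x h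
    rw [List.map_eq_nil_iff] at h
    exact hlne h
  intro x
  induction x with
  | zero =>
    intro _
    refine ⟨by simp [buildL], hbhead 0, hblast 0, hblock1 0, hblock2 0 (by omega), ?_⟩
    intro e he
    rw [show buildL k ℓ l 0 = l.map (blockF k ℓ 0) from rfl, List.mem_map] at he
    obtain ⟨t, ht, rfl⟩ := he
    exact hblt 0 t (by omega) (hmem t ht)
  | succ j ihj =>
    intro hx
    obtain ⟨IHlen, IHhead, IHlast, IHc1, IHc2, IHmem⟩ := ihj (by omega)
    have hne : buildL k ℓ l j ≠ [] := by
      intro h; rw [h] at IHhead; simp at IHhead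
    have heq : buildL k ℓ l (j+1)
        = buildL k ℓ l j ++ glueE k ℓ (j+1) :: l.map (blockF k ℓ (j+1)) := rfl
    refine ⟨?_, ?_, ?_, ?_, ?_, ?_⟩
    · rw [heq, List.length_append, List.length_cons, List.length_map, IHlen]
      ring
    · rw [heq, List.head?_append_of_ne_nil _ hne, IHhead]
    · rw [heq, List.getLast?_append_cons,
        show glueE k ℓ (j+1) :: l.map (blockF k ℓ (j+1))
          = [glueE k ℓ (j+1)] ++ l.map (blockF k ℓ (j+1)) from rfl,
        List.getLast?_append_of_ne_nil _ (hbne (j+1)), hblast (j+1)]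
    · rw [heq]
      refine IHc1.append ?_ ?_
      · rw [List.isChain_cons]
        constructor
        · intro p hp
          rw [hbhead (j+1)] at hp
          simp only [Option.mem_some_iff] at hp
          subst hp
          show glueE k ℓ (j+1) < blockF k ℓ (j+1) a
          unfold glueE blockF
          have h5 : k ≤ a*k := Nat.le_mul_of_pos_left k (by omega)
          omega
        · exact hblock1 (j+1)
      · intro p hp q hq
        rw [IHlast] at hp
        simp only [Option.mem_some_iff] at hp
        subst hp
        simp only [List.head?_cons, Option.mem_some_iff] at hq
        subst hq
        show blockF k ℓ j b < glueE k ℓ (j+1)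
        unfold glueE blockF
        have h4 := hin b (k-1-j) hbmem (by omega)
        have h9 : (j+1)*k^(ℓ+1) = j*k^(ℓ+1) + k^(ℓ+1) := by ring
        omega
    · rw [heq]
      refine IHc2.append ?_ ?_
      · rw [List.isChain_cons]
        constructor
        · intro p hp
          rw [hbhead (j+1)] at hp
          simp only [Option.mem_some_iff] at hp
          subst hp
          show digitRev k (ℓ+2) (blockF k ℓ (j+1) a) < digitRev k (ℓ+2) (glueE k ℓ (j+1))
          rw [hbrev (j+1) a (by omega) hamem, hgrev (j+1) (by omega) (by omega)]
          have hRa : digitRev k ℓ a < k^ℓ := rev_lt hk1 _ _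
          have h4 := hin (digitRev k ℓ a) (j+1) hRa (by omega)
          have h7 : k - (j+1) = (k-1-(j+1)) + 1 := by omega
          have h7' : (k-(j+1))*k^(ℓ+1) = ((k-1-(j+1))+1)*k^(ℓ+1) := by rw [h7]
          have h8 : ((k-1-(j+1)) + 1)*k^(ℓ+1) = (k-1-(j+1))*k^(ℓ+1) + k^(ℓ+1) := by ring
          omega
        · exact hblock2 (j+1) (by omega)
      · intro p hp q hq
        rw [IHlast] at hp
        simp only [Option.mem_some_iff] at hp
        subst hp
        simp only [List.head?_cons, Option.mem_some_iff] at hq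
        subst hq
        show digitRev k (ℓ+2) (glueE k ℓ (j+1)) < digitRev k (ℓ+2) (blockF k ℓ j b)
        rw [hgrev (j+1) (by omega) (by omega), hbrev j b (by omega) hbmem]
        have h7 : k - (j+1) = k-1-j := by omega
        have h7' : (k-(j+1))*k^(ℓ+1) = (k-1-j)*k^(ℓ+1) := by rw [h7]
        have h5 : k ≤ digitRev k ℓ b * k := Nat.le_mul_of_pos_left k (by omega)
        omega
    · intro e he
      rw [heq, List.mem_append, List.mem_cons] at he
      rcases he with he | he | he
      · exact IHmem e he
      · rw [he]; exact hglt (j+1) (by omega) (by omega)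
      · rw [List.mem_map] at he
        obtain ⟨t, ht, rfl⟩ := he
        exact hblt (j+1) t (by omega) (hmem t ht)

lemma LB_step {k ℓ : ℕ} (hk : 2 ≤ k) (hℓ : 1 ≤ ℓ) (h : LB k ℓ) : LB k (ℓ+2) := by
  obtain ⟨l, a, b, hlen, hhead, hlast, ha, hb, hc1, hc2, hmem⟩ := h
  have hk1 : 1 ≤ k := by omega
  obtain ⟨Hlen, Hhead, Hlast, Hc1, Hc2, Hmem⟩ :=
    buildL_spec hk hℓ hhead hlast ha hb hc1 hc2 hmem (k-1) (le_refl _)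
  refine ⟨buildL k ℓ l (k-1), blockF k ℓ 0 a, blockF k ℓ (k-1) b, ?_, Hhead, Hlast,
    ?_, ?_, Hc1, Hc2, Hmem⟩
  · rw [Hlen, hlen, show k-1+1 = k from by omega, Dv_step hk1 hℓ]
  · unfold blockF
    omega
  · have hbmem : b < k^ℓ := hmem b (List.mem_of_mem_getLast? (by rw [hlast]; rfl))
    have h3 := rev_elem (k := k) (ℓ := ℓ) (x := k-1) (t := b) (y := k-1-(k-1))
      hk1 (by omega) hbmem (by omega)
    rw [show blockF k ℓ (k-1) b = (k-1) * k^(ℓ+1) + b * k + (k-1-(k-1)) from rfl, h3]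
    omega

lemma LB_all {k : ℕ} (hk : 2 ≤ k) : ∀ ℓ, 1 ≤ ℓ → LB k ℓ := by
  have key : ∀ m, LB k (m+1) ∧ LB k (m+2) := by
    intro m
    induction m with
    | zero => exact ⟨LB_one hk, LB_two hk⟩
    | succ j ih => exact ⟨ih.2, LB_step hk (by omega) ih.1⟩
  intro ℓ hℓ
  obtain ⟨m, rfl⟩ : ∃ m, ℓ = m+1 := ⟨ℓ-1, by omega⟩
  exact (key m).1

lemma lower {k ℓ : ℕ} (hk : 2 ≤ k) (hℓ : 1 ≤ ℓ) :
    HasDecSubseq (k^ℓ) (fun p => digitRev k ℓ (p : ℕ)) (Dv k ℓ) := by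
  obtain ⟨l, a, b, hlen, hhead, hlast, ha, hb, hc1, hc2, hmem⟩ := LB_all hk ℓ hℓ
  have hp1 : l.Pairwise (· < ·) := List.isChain_iff_pairwise.mp hc1
  have hp2 : l.Pairwise (fun u v => digitRev k ℓ v < digitRev k ℓ u) := by
    have : IsTrans ℕ (fun u v => digitRev k ℓ v < digitRev k ℓ u) :=
      ⟨fun _ _ _ h1 h2 => lt_trans h2 h1⟩
    exact List.isChain_iff_pairwise.mp hc2
  refine ⟨fun i => ⟨l.get (Fin.cast hlen.symm i), hmem _ (l.get_mem _)⟩, ?_, ?_⟩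
  · intro i j hij
    have := (List.pairwise_iff_get.mp hp1) (Fin.cast hlen.symm i) (Fin.cast hlen.symm j)
      (by simpa using hij)
    simpa using this
  · intro i j hij
    have := (List.pairwise_iff_get.mp hp2) (Fin.cast hlen.symm i) (Fin.cast hlen.symm j)
      (by simpa using hij)
    simpa using this

end S11

/-- The length of the longest strictly decreasing subsequence of the digit-reversal
permutation `R_k(ℓ)` equals `(k+1)·k^(ℓ/2-1) - 1` if `ℓ` is even and `2·k^((ℓ-1)/2) - 1`
if `ℓ` is odd. -/
theorem stmt11 (k ℓ : ℕ) (hk : 2 ≤ k) (hℓ : 1 ≤ ℓ) :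
    (Even ℓ →
      HasDecSubseq (k ^ ℓ) (fun p => digitRev k ℓ (p : ℕ)) ((k + 1) * k ^ (ℓ / 2 - 1) - 1) ∧
      ∀ d, HasDecSubseq (k ^ ℓ) (fun p => digitRev k ℓ (p : ℕ)) d →
        d ≤ (k + 1) * k ^ (ℓ / 2 - 1) - 1) ∧
    (Odd ℓ →
      HasDecSubseq (k ^ ℓ) (fun p => digitRev k ℓ (p : ℕ)) (2 * k ^ ((ℓ - 1) / 2) - 1) ∧
      ∀ d, HasDecSubseq (k ^ ℓ) (fun p => digitRev k ℓ (p : ℕ)) d →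
        d ≤ 2 * k ^ ((ℓ - 1) / 2) - 1) := by
  constructor
  · intro he
    have hD : S11.Dv k ℓ = (k + 1) * k ^ (ℓ / 2 - 1) - 1 := by
      unfold S11.Dv
      rw [if_pos he]
    constructor
    · rw [← hD]; exact S11.lower hk hℓ
    · intro d hd
      rw [← hD]
      exact S11.upper hk hℓ d hd
  · intro ho
    have h2 : ℓ % 2 = 1 := Nat.odd_iff.mp ho
    have hD : S11.Dv k ℓ = 2 * k ^ ((ℓ - 1) / 2) - 1 := by
      unfold S11.Dv
      rw [if_neg (by rw [Nat.even_iff]; omega), show ℓ/2 = (ℓ-1)/2 from by omega]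
    constructor
    · rw [← hD]; exact S11.lower hk hℓ
    · intro d hd
      rw [← hD]
      exact S11.upper hk hℓ d hd
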